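/- For a graph K on vertex set {(g_i, h_j) : 1 ≤ i ≤ p, 1 ≤ j ≤ q} with p, q ≥ 2, the following three statements are equivalent: (i) K ∈ 𝒦(p,q), i.e., K is a tensor 2-sum with first factors on p vertices and second factors on q vertices; (ii) K is a spanning, cross-like subgraph of K_p ⊗ K_q; (iii) K is a 2-sum of tensor-elementary graphs. -/

import Mathlib

open SimpleGraph

variable {α β : Type*}

/-- The tensor (categorical / direct) product of two simple graphs:
`(g,h)` and `(g',h')` are adjacent iff `g ~ g'` in `G` and `h ~ h'` in `H`. -/
def tensorProd (G : SimpleGraph α) (H : SimpleGraph β) : SimpleGraph (α × β) where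
  Adj x y := G.Adj x.1 y.1 ∧ H.Adj x.2 y.2
  symm := ⟨fun _ _ h => ⟨h.1.symm, h.2.symm⟩⟩
  loopless := ⟨fun x h => G.irrefl h.1⟩

infixl:70 " ⊗t " => tensorProd

@[simp] lemma tensorProd_adj (G : SimpleGraph α) (H : SimpleGraph β) (x y : α × β) :
    (G ⊗t H).Adj x y ↔ G.Adj x.1 y.1 ∧ H.Adj x.2 y.2 := Iff.rfl

/-- The 2-sum (sum modulo 2) of two graphs on a common vertex set: the edge set is
the symmetric difference of the two edge sets. -/
def twoSum (G H : SimpleGraph α) : SimpleGraph α where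
  Adj u v := (G.Adj u v ∧ ¬ H.Adj u v) ∨ (H.Adj u v ∧ ¬ G.Adj u v)
  symm := ⟨fun u v h => h.imp (fun h' => ⟨h'.1.symm, fun hh => h'.2 hh.symm⟩)
    (fun h' => ⟨h'.1.symm, fun hh => h'.2 hh.symm⟩)⟩
  loopless := ⟨fun u h => h.elim (fun h' => G.irrefl h'.1) (fun h' => H.irrefl h'.1)⟩

@[simp] lemma twoSum_adj (G H : SimpleGraph α) (u v : α) :
    (twoSum G H).Adj u v ↔ (G.Adj u v ∧ ¬ H.Adj u v) ∨ (H.Adj u v ∧ ¬ G.Adj u v) := Iff.rfl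

/-- The iterated 2-sum `⊕_{k=1}^l F k` (`⊥`, the empty graph, is the neutral element). -/
def twoSumMany {l : ℕ} (F : Fin l → SimpleGraph α) : SimpleGraph α :=
  (List.ofFn F).foldr twoSum ⊥

/-- `K ∈ 𝒦(p,q)`: `K` is a 2-sum `⊕_{k=1}^l (G_k ⊗ H_k)` of tensor products, where every
`G_k` is a graph on `p` fixed vertices with at least one edge and every `H_k` is a graph on
`q` fixed vertices with at least one edge. -/
def MemK (p q : ℕ) (K : SimpleGraph (Fin p × Fin q)) : Prop :=
  ∃ (l : ℕ) (G : Fin l → SimpleGraph (Fin p)) (H : Fin l → SimpleGraph (Fin q)),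
    0 < l ∧ (∀ k, ∃ a b, (G k).Adj a b) ∧ (∀ k, ∃ c d, (H k).Adj c d) ∧
    K = twoSumMany fun k => (G k) ⊗t (H k)

/-- A graph on `α × β` is cross-like if `(a,b) ~ (c,d)` implies `(a,d) ~ (c,b)`. -/
def CrossLike (K : SimpleGraph (α × β)) : Prop :=
  ∀ a c : α, ∀ b d : β, K.Adj (a, b) (c, d) → K.Adj (a, d) (c, b)

/-- The graph with the single edge `{a,b}` (for `a ≠ b`). -/
def singleEdge (a b : α) : SimpleGraph α := fromEdgeSet {s(a, b)}

/-- The tensor-elementary graph `E(i,i';j,j')`: the tensor product of the single-edge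
graph with edge `{g_i, g_{i'}}` and the single-edge graph with edge `{h_j, h_{j'}}`. -/
def tensorElem {p q : ℕ} (i i' : Fin p) (j j' : Fin q) : SimpleGraph (Fin p × Fin q) :=
  singleEdge i i' ⊗t singleEdge j j'

section Aux

variable {γ : Type*}

lemma twoSum_self_left (A B : SimpleGraph γ) : twoSum A (twoSum A B) = B := by
  ext u v; simp only [twoSum_adj]; tauto

lemma twoSum_le {A B T : SimpleGraph γ} (hA : A ≤ T) (hB : B ≤ T) : twoSum A B ≤ T := by
  intro u v h
  rcases h with h | h
  · exact hA h.1
  · exact hB h.1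

lemma crossLike_bot : CrossLike (⊥ : SimpleGraph (α × β)) := by
  intro a c b d h; simp at h

lemma crossLike_tensor (G : SimpleGraph α) (H : SimpleGraph β) : CrossLike (G ⊗t H) := by
  intro a c b d h; exact ⟨h.1, h.2.symm⟩

lemma crossLike_iff (K : SimpleGraph (α × β)) (hK : CrossLike K) (a c : α) (b d : β) :
    K.Adj (a, b) (c, d) ↔ K.Adj (a, d) (c, b) :=
  ⟨hK a c b d, hK a c d b⟩

lemma crossLike_twoSum {A B : SimpleGraph (α × β)} (hA : CrossLike A) (hB : CrossLike B) :
    CrossLike (twoSum A B) := by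
  intro a c b d h
  simp only [twoSum_adj] at h ⊢
  rw [crossLike_iff A hA, crossLike_iff B hB] at h
  exact h

lemma foldr_le {T : SimpleGraph γ} (L : List (SimpleGraph γ)) (h : ∀ G ∈ L, G ≤ T) :
    L.foldr twoSum ⊥ ≤ T := by
  induction L with
  | nil => exact bot_le
  | cons A L ih =>
    exact twoSum_le (h A List.mem_cons_self) (ih fun G hG => h G (List.mem_cons_of_mem _ hG))

lemma foldr_crossLike (L : List (SimpleGraph (α × β))) (h : ∀ G ∈ L, CrossLike G) :
    CrossLike (L.foldr twoSum ⊥) := by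
  induction L with
  | nil => exact crossLike_bot
  | cons A L ih =>
    exact crossLike_twoSum (h A List.mem_cons_self)
      (ih fun G hG => h G (List.mem_cons_of_mem _ hG))

lemma singleEdge_adj {a b x y : α} :
    (singleEdge a b).Adj x y ↔ s(x, y) = s(a, b) ∧ x ≠ y := by
  simp [singleEdge]

lemma singleEdge_adj_self {a b : α} (h : a ≠ b) : (singleEdge a b).Adj a b :=
  singleEdge_adj.2 ⟨rfl, h⟩

lemma tensorElem_le {p q : ℕ} {a c : Fin p} {b d : Fin q} {K : SimpleGraph (Fin p × Fin q)}
    (hcr : CrossLike K) (hK : K.Adj (a, b) (c, d)) : tensorElem a c b d ≤ K := by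
  rintro ⟨u1, u2⟩ ⟨v1, v2⟩ ⟨h1, h2⟩
  rw [singleEdge_adj] at h1 h2
  obtain ⟨he1, -⟩ := h1
  obtain ⟨he2, -⟩ := h2
  rw [Sym2.eq_iff] at he1 he2
  rcases he1 with ⟨rfl, rfl⟩ | ⟨rfl, rfl⟩ <;> rcases he2 with ⟨rfl, rfl⟩ | ⟨rfl, rfl⟩
  · exact hK
  · exact hcr _ _ _ _ hK
  · exact (hcr _ _ _ _ hK).symm
  · exact hK.symm

/-- Key induction: every cross-like spanning subgraph of `K_p ⊗ K_q` is a `foldr`-2-sum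
of a list of tensor-elementary graphs. -/
lemma exists_list {p q : ℕ} (n : ℕ) (K : SimpleGraph (Fin p × Fin q))
    (hn : K.edgeSet.ncard ≤ n)
    (hle : K ≤ (⊤ : SimpleGraph (Fin p)) ⊗t (⊤ : SimpleGraph (Fin q))) (hcr : CrossLike K) :
    ∃ L : List (SimpleGraph (Fin p × Fin q)),
      (∀ T ∈ L, ∃ i i' j j', i ≠ i' ∧ j ≠ j' ∧ T = tensorElem i i' j j') ∧
      K = L.foldr twoSum ⊥ := by
  induction n generalizing K with
  | zero =>
    refine ⟨[], by simp, ?_⟩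
    have hfin : K.edgeSet.Finite := Set.toFinite _
    have : K.edgeSet = ∅ := (Set.ncard_eq_zero hfin).1 (Nat.le_zero.1 hn)
    ext u v
    simp only [List.foldr_nil, SimpleGraph.bot_adj, iff_false]
    intro h
    have hm := (SimpleGraph.mem_edgeSet K).2 h
    rw [this] at hm
    exact hm
  | succ n ih =>
    by_cases hadj : ∃ x y, K.Adj x y
    · obtain ⟨⟨a, b⟩, ⟨c, d⟩, hK⟩ := hadj
      have hac : a ≠ c := (hle hK).1.ne
      have hbd : b ≠ d := (hle hK).2.ne
      set T : SimpleGraph (Fin p × Fin q) := tensorElem a c b d with hT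
      have hTK : T ≤ K := tensorElem_le hcr hK
      set K' : SimpleGraph (Fin p × Fin q) := twoSum K T with hK'
      have hK'le : K' ≤ K := by
        intro u v h
        rcases h with h | h
        · exact h.1
        · exact hTK h.1
      have hcard : K'.edgeSet.ncard ≤ n := by
        have hsub : K'.edgeSet ⊆ K.edgeSet :=
          SimpleGraph.edgeSet_subset_edgeSet.2 hK'le
        have hmem : s((a, b), (c, d)) ∈ K.edgeSet :=
          (SimpleGraph.mem_edgeSet K).2 hK
        have hTadj : T.Adj (a, b) (c, d) :=
          ⟨singleEdge_adj_self hac, singleEdge_adj_self hbd⟩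
        have hnmem : s((a, b), (c, d)) ∉ K'.edgeSet := by
          rw [SimpleGraph.mem_edgeSet]
          rintro (h | h)
          · exact h.2 hTadj
          · exact h.2 hK
        have hss : K'.edgeSet ⊂ K.edgeSet :=
          ⟨hsub, fun h => hnmem (h hmem)⟩
        have := Set.ncard_lt_ncard hss (Set.toFinite _)
        omega
      have hcrT : CrossLike T := crossLike_tensor _ _
      obtain ⟨L, hL, hKL⟩ := ih K' hcard (le_trans hK'le hle) (crossLike_twoSum hcr hcrT)
      refine ⟨T :: L, ?_, ?_⟩
      · rintro S hS
        rcases List.mem_cons.1 hS with rfl | hS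
        · exact ⟨a, c, b, d, hac, hbd, rfl⟩
        · exact hL S hS
      · have : K = twoSum T K' := by
          rw [hK']
          ext u v
          simp only [twoSum_adj]
          tauto
        rw [List.foldr_cons, ← hKL, ← this]
    · refine ⟨[], by simp, ?_⟩
      ext u v
      simp only [List.foldr_nil, SimpleGraph.bot_adj, iff_false]
      exact fun h => hadj ⟨u, v, h⟩

end Aux

/-- **Theorem (characterization of tensor 2-sums).** For `p, q ≥ 2` and a graph `K` on the
vertex set `Fin p × Fin q`, the following are equivalent: (i) `K ∈ 𝒦(p,q)`; (ii) `K` is a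
spanning, cross-like subgraph of `K_p ⊗ K_q`; (iii) `K` is a 2-sum of tensor-elementary
graphs. -/
theorem tensor2Sum_characterization (p q : ℕ) (hp : 2 ≤ p) (hq : 2 ≤ q)
    (K : SimpleGraph (Fin p × Fin q)) :
    List.TFAE
      [MemK p q K,
       K ≤ (⊤ : SimpleGraph (Fin p)) ⊗t (⊤ : SimpleGraph (Fin q)) ∧ CrossLike K,
       ∃ (l : ℕ) (i i' : Fin l → Fin p) (j j' : Fin l → Fin q),
         0 < l ∧ (∀ k, i k ≠ i' k) ∧ (∀ k, j k ≠ j' k) ∧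
         K = twoSumMany fun k => tensorElem (i k) (i' k) (j k) (j' k)] := by
  tfae_have 1 → 2 := by
    rintro ⟨l, G, H, -, -, -, rfl⟩
    constructor
    · refine foldr_le _ ?_
      intro S hS
      rw [List.mem_ofFn] at hS
      obtain ⟨k, rfl⟩ := hS
      rintro ⟨u1, u2⟩ ⟨v1, v2⟩ ⟨h1, h2⟩
      exact ⟨h1.ne, h2.ne⟩
    · refine foldr_crossLike _ ?_
      intro S hS
      rw [List.mem_ofFn] at hS
      obtain ⟨k, rfl⟩ := hS
      exact crossLike_tensor _ _
  tfae_have 2 → 3 := by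
    rintro ⟨hle, hcr⟩
    obtain ⟨L, hL, hKL⟩ := exists_list K.edgeSet.ncard K le_rfl hle hcr
    set E0 : SimpleGraph (Fin p × Fin q) :=
      tensorElem ⟨0, by omega⟩ ⟨1, by omega⟩ ⟨0, by omega⟩ ⟨1, by omega⟩ with hE0
    set L' := E0 :: E0 :: L with hL'def
    have hL' : ∀ T ∈ L', ∃ i i' j j', i ≠ i' ∧ j ≠ j' ∧ T = tensorElem i i' j j' := by
      intro T hT
      rcases List.mem_cons.1 hT with rfl | hT
      · exact ⟨_, _, _, _, by simp, by simp, rfl⟩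
      rcases List.mem_cons.1 hT with rfl | hT
      · exact ⟨_, _, _, _, by simp, by simp, rfl⟩
      · exact hL T hT
    have hK' : K = L'.foldr twoSum ⊥ := by
      rw [hL'def, List.foldr_cons, List.foldr_cons, twoSum_self_left, ← hKL]
    have hchoice : ∀ k : Fin L'.length, ∃ i i' j j',
        i ≠ i' ∧ j ≠ j' ∧ L'.get k = tensorElem i i' j j' :=
      fun k => hL' _ (L'.get_mem k)
    choose i i' j j' h1 h2 h3 using hchoice
    refine ⟨L'.length, i, i', j, j', by simp [hL'def], h1, h2, ?_⟩
    rw [twoSumMany]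
    have hfn : (fun k => tensorElem (i k) (i' k) (j k) (j' k)) = L'.get :=
      funext fun k => (h3 k).symm
    rw [hfn, List.ofFn_get]
    exact hK'
  tfae_have 3 → 1 := by
    rintro ⟨l, i, i', j, j', hl, h1, h2, rfl⟩
    exact ⟨l, fun k => singleEdge (i k) (i' k), fun k => singleEdge (j k) (j' k), hl,
      fun k => ⟨_, _, singleEdge_adj_self (h1 k)⟩,
      fun k => ⟨_, _, singleEdge_adj_self (h2 k)⟩, rfl⟩
  tfae_finish
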